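/- Let M be a shattered m × n zero-one matrix with m, n ≥ 4. Then every independent set of at most 3 vertices in the Albert graph A_M has a common neighbor. -/

import Mathlib

/-- Vertices of the Albert graph: `a i`, `b i` for rows, `c j`, `d j` for columns. -/
inductive AlbertVertex (m n : ℕ) where
  | a : Fin m → AlbertVertex m n
  | b : Fin m → AlbertVertex m n
  | c : Fin n → AlbertVertex m n
  | d : Fin n → AlbertVertex m n
  deriving DecidableEq

/-- Adjacency relation of the Albert graph of a 0-1 matrix `M`. -/
def albertAdj {m n : ℕ} (M : Fin m → Fin n → Bool) :
    AlbertVertex m n → AlbertVertex m n → Prop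
  | .a i, .b i' => i = i'
  | .b i, .a i' => i = i'
  | .c j, .d j' => j = j'
  | .d j, .c j' => j = j'
  | .a i, .c j => M i j = true
  | .c j, .a i => M i j = true
  | .b i, .d j => M i j = true
  | .d j, .b i => M i j = true
  | .a i, .d j => M i j = false
  | .d j, .a i => M i j = false
  | .b i, .c j => M i j = false
  | .c j, .b i => M i j = false
  | _, _ => False

/-- The Albert graph `A_M` of a 0-1 matrix `M`. -/
def albertGraph {m n : ℕ} (M : Fin m → Fin n → Bool) :
    SimpleGraph (AlbertVertex m n) where
  Adj := albertAdj M
  symm := by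
    constructor
    intro x y h
    cases x <;> cases y <;> simp_all [albertAdj]
  loopless := by
    constructor
    intro x h
    cases x <;> simp_all [albertAdj]

/-- A 0-1 matrix is *shattered* if any three distinct rows realize all four
column-patterns `aaa`, `aab`, `aba`, `baa` (up to complement), and similarly
for any three distinct columns. -/
def Shattered {m n : ℕ} (M : Fin m → Fin n → Bool) : Prop :=
  (∀ i₁ i₂ i₃ : Fin m, i₁ ≠ i₂ → i₁ ≠ i₃ → i₂ ≠ i₃ →
    (∃ j, M i₁ j = M i₂ j ∧ M i₂ j = M i₃ j) ∧
    (∃ j, M i₁ j = M i₂ j ∧ M i₂ j ≠ M i₃ j) ∧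
    (∃ j, M i₁ j = M i₃ j ∧ M i₁ j ≠ M i₂ j) ∧
    (∃ j, M i₂ j = M i₃ j ∧ M i₁ j ≠ M i₂ j)) ∧
  (∀ j₁ j₂ j₃ : Fin n, j₁ ≠ j₂ → j₁ ≠ j₃ → j₂ ≠ j₃ →
    (∃ i, M i j₁ = M i j₂ ∧ M i j₂ = M i j₃) ∧
    (∃ i, M i j₁ = M i j₂ ∧ M i j₂ ≠ M i j₃) ∧
    (∃ i, M i j₁ = M i j₃ ∧ M i j₁ ≠ M i j₂) ∧
    (∃ i, M i j₂ = M i j₃ ∧ M i j₁ ≠ M i j₂))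


section Aux

variable {m n : ℕ}

/-- row vertex with sign -/
def rvx (i : Fin m) (s : Bool) : AlbertVertex m n := if s then .a i else .b i
/-- column vertex with sign -/
def cvx (j : Fin n) (t : Bool) : AlbertVertex m n := if t then .c j else .d j

lemma albert_cases (v : AlbertVertex m n) :
    (∃ i s, v = rvx i s) ∨ (∃ j t, v = cvx j t) := by
  cases v with
  | a i => exact .inl ⟨i, true, rfl⟩
  | b i => exact .inl ⟨i, false, rfl⟩
  | c j => exact .inr ⟨j, true, rfl⟩
  | d j => exact .inr ⟨j, false, rfl⟩

variable (M : Fin m → Fin n → Bool)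

lemma adj_def : (albertGraph M).Adj = albertAdj M := rfl

lemma adj_rr (i i' : Fin m) (s s' : Bool) :
    (albertGraph M).Adj (rvx i s) (rvx i' s') ↔ i = i' ∧ s ≠ s' := by
  cases s <;> cases s' <;> simp [adj_def, albertAdj, rvx]

lemma adj_rc (i : Fin m) (j : Fin n) (s t : Bool) :
    (albertGraph M).Adj (rvx i s) (cvx j t) ↔ M i j = (s == t) := by
  cases s <;> cases t <;> simp [adj_def, albertAdj, rvx, cvx]

lemma adj_cr (i : Fin m) (j : Fin n) (s t : Bool) :
    (albertGraph M).Adj (cvx j t) (rvx i s) ↔ M i j = (s == t) := by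
  cases s <;> cases t <;> simp [adj_def, albertAdj, rvx, cvx]

lemma adj_cc (j j' : Fin n) (t t' : Bool) :
    (albertGraph M).Adj (cvx j t) (cvx j' t') ↔ j = j' ∧ t ≠ t' := by
  cases t <;> cases t' <;> simp [adj_def, albertAdj, cvx]

lemma rvx_inj {i i' : Fin m} {s s' : Bool} (h : (rvx i s : AlbertVertex m n) = rvx i' s') :
    i = i' ∧ s = s' := by
  cases s <;> cases s' <;> simp_all [rvx]

lemma cvx_inj {j j' : Fin n} {t t' : Bool} (h : (cvx j t : AlbertVertex m n) = cvx j' t') :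
    j = j' ∧ t = t' := by
  cases t <;> cases t' <;> simp_all [cvx]

lemma rvx_ne_cvx (i : Fin m) (j : Fin n) (s t : Bool) :
    (rvx i s : AlbertVertex m n) ≠ cvx j t := by
  cases s <;> cases t <;> simp [rvx, cvx]

end Aux

/-- boolean key lemma -/
lemma bkey : ∀ (s1 s2 b1 b2 : Bool), ((b1 = b2) ↔ (s1 = s2)) →
    b1 = (s1 == (s1 == b1)) ∧ b2 = (s2 == (s1 == b1)) := by decide

lemma bself : ∀ (s b : Bool), b = (s == (s == b)) := by decide

lemma bneg : ∀ (a s t : Bool), a ≠ (s == t) → a = (s == !t) := by decide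

section Rows

variable {m n : ℕ} (M : Fin m → Fin n → Bool)

lemma exists_third (hm : 3 ≤ m) (i1 i2 : Fin m) : ∃ i3 : Fin m, i3 ≠ i1 ∧ i3 ≠ i2 := by
  by_contra h
  push_neg at h
  have hsub : (Finset.univ : Finset (Fin m)) ⊆ {i1, i2} := by
    intro i _
    rcases eq_or_ne i i1 with rfl | hne
    · simp
    · simp [h i hne]
  have hc := Finset.card_le_card hsub
  have h2 : ({i1, i2} : Finset (Fin m)).card ≤ 2 := Finset.card_insert_le _ _ |>.trans (by simp)
  simp [Finset.card_univ] at hc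
  omega

lemma twoRows (hm : 3 ≤ m) (hM : Shattered M) (i1 i2 : Fin m) (h12 : i1 ≠ i2)
    (s1 s2 : Bool) : ∃ j t, M i1 j = (s1 == t) ∧ M i2 j = (s2 == t) := by
  obtain ⟨i3, h31, h32⟩ := exists_third hm i1 i2
  obtain ⟨⟨ja, ha1, _⟩, _, _, ⟨jd, _, hd2⟩⟩ := hM.1 i1 i2 i3 h12 h31.symm h32.symm
  by_cases hs : s1 = s2
  · have := bkey s1 s2 (M i1 ja) (M i2 ja) (iff_of_true ha1 hs)
    exact ⟨ja, s1 == M i1 ja, this.1, this.2⟩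
  · have := bkey s1 s2 (M i1 jd) (M i2 jd) (iff_of_false hd2 hs)
    exact ⟨jd, s1 == M i1 jd, this.1, this.2⟩

lemma threeRows (hM : Shattered M) (i1 i2 i3 : Fin m)
    (h12 : i1 ≠ i2) (h13 : i1 ≠ i3) (h23 : i2 ≠ i3) (s1 s2 s3 : Bool) :
    ∃ j t, M i1 j = (s1 == t) ∧ M i2 j = (s2 == t) ∧ M i3 j = (s3 == t) := by
  obtain ⟨⟨ja, ha1, ha2⟩, ⟨jb, hb1, hb2⟩, ⟨jc, hc1, hc2⟩, ⟨jd, hd1, hd2⟩⟩ :=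
    hM.1 i1 i2 i3 h12 h13 h23
  by_cases hs12 : s1 = s2 <;> by_cases hs13 : s1 = s3
  · have k2 := bkey s1 s2 (M i1 ja) (M i2 ja) (iff_of_true ha1 hs12)
    have k3 := bkey s1 s3 (M i1 ja) (M i3 ja) (iff_of_true (ha1.trans ha2) hs13)
    exact ⟨ja, s1 == M i1 ja, k2.1, k2.2, k3.2⟩
  · have k2 := bkey s1 s2 (M i1 jb) (M i2 jb) (iff_of_true hb1 hs12)
    have k3 := bkey s1 s3 (M i1 jb) (M i3 jb) (iff_of_false (hb1 ▸ hb2) hs13)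
    exact ⟨jb, s1 == M i1 jb, k2.1, k2.2, k3.2⟩
  · have k2 := bkey s1 s2 (M i1 jc) (M i2 jc) (iff_of_false hc2 hs12)
    have k3 := bkey s1 s3 (M i1 jc) (M i3 jc) (iff_of_true hc1 hs13)
    exact ⟨jc, s1 == M i1 jc, k2.1, k2.2, k3.2⟩
  · have k2 := bkey s1 s2 (M i1 jd) (M i2 jd) (iff_of_false hd2 hs12)
    have k3 := bkey s1 s3 (M i1 jd) (M i3 jd)
      (iff_of_false (fun h => hd2 (h.trans hd1.symm)) hs13)
    exact ⟨jd, s1 == M i1 jd, k2.1, k2.2, k3.2⟩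

lemma rowCaseGen (hm : 3 ≤ m) (hn : 0 < n) (hM : Shattered M)
    (i1 i2 i3 : Fin m) (s1 s2 s3 : Bool)
    (c12 : i1 = i2 → s1 = s2) (c13 : i1 = i3 → s1 = s3) (c23 : i2 = i3 → s2 = s3) :
    ∃ j t, M i1 j = (s1 == t) ∧ M i2 j = (s2 == t) ∧ M i3 j = (s3 == t) := by
  by_cases h12 : i1 = i2
  · by_cases h13 : i1 = i3
    · refine ⟨⟨0, hn⟩, s1 == M i1 ⟨0, hn⟩, bself _ _, ?_, ?_⟩
      · rw [← h12, ← c12 h12]; exact bself _ _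
      · rw [← h13, ← c13 h13]; exact bself _ _
    · obtain ⟨j, t, e1, e3⟩ := twoRows M hm hM i1 i3 h13 s1 s3
      exact ⟨j, t, e1, by rw [← h12, ← c12 h12]; exact e1, e3⟩
  · by_cases h13 : i1 = i3
    · obtain ⟨j, t, e1, e2⟩ := twoRows M hm hM i1 i2 h12 s1 s2
      exact ⟨j, t, e1, e2, by rw [← h13, ← c13 h13]; exact e1⟩
    · by_cases h23 : i2 = i3
      · obtain ⟨j, t, e1, e2⟩ := twoRows M hm hM i1 i2 h12 s1 s2
        exact ⟨j, t, e1, e2, by rw [← h23, ← c23 h23]; exact e2⟩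
      · exact threeRows M hM i1 i2 i3 h12 h13 h23 s1 s2 s3

lemma shattered_transpose (hM : Shattered M) : Shattered (fun j i => M i j) :=
  ⟨hM.2, hM.1⟩

end Rows

lemma bswap : ∀ (s t : Bool), (s == !t) = ((!s) == t) := by decide
lemma bcomm : ∀ (s t : Bool), (s == t) = (t == s) := by decide
lemma bnotne (t : Bool) : (!t) ≠ t := by cases t <;> simp

section Common

variable {m n : ℕ} (M : Fin m → Fin n → Bool)

lemma compat_rr {i i' : Fin m} {s s' : Bool}
    (h : (rvx i s : AlbertVertex m n) = rvx i' s' ∨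
      ¬(albertGraph M).Adj (rvx i s) (rvx i' s')) : i = i' → s = s' := by
  intro hii
  rcases h with heq | hna
  · exact (rvx_inj heq).2
  · by_contra hss
    exact hna ((adj_rr M i i' s s').mpr ⟨hii, hss⟩)

lemma compat_cc {j j' : Fin n} {t t' : Bool}
    (h : (cvx j t : AlbertVertex m n) = cvx j' t' ∨
      ¬(albertGraph M).Adj (cvx j t) (cvx j' t')) : j = j' → t = t' := by
  intro hjj
  rcases h with heq | hna
  · exact (cvx_inj heq).2
  · by_contra htt
    exact hna ((adj_cc M j j' t t').mpr ⟨hjj, htt⟩)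

lemma nonadj_rc {i : Fin m} {j : Fin n} {s t : Bool}
    (h : (rvx i s : AlbertVertex m n) = cvx j t ∨
      ¬(albertGraph M).Adj (rvx i s) (cvx j t)) : M i j = (s == !t) := by
  rcases h with heq | hna
  · exact absurd heq (rvx_ne_cvx i j s t)
  · exact bneg _ _ _ (fun he => hna ((adj_rc M i j s t).mpr he))

lemma nonadj_cr {i : Fin m} {j : Fin n} {s t : Bool}
    (h : (cvx j t : AlbertVertex m n) = rvx i s ∨
      ¬(albertGraph M).Adj (cvx j t) (rvx i s)) : M i j = (s == !t) := by
  rcases h with heq | hna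
  · exact absurd heq.symm (rvx_ne_cvx i j s t)
  · exact bneg _ _ _ (fun he => hna ((adj_cr M i j s t).mpr he))

lemma commonNbr (hm : 3 ≤ m) (hn : 3 ≤ n) (hM : Shattered M)
    (x y z : AlbertVertex m n)
    (hxy : x = y ∨ ¬(albertGraph M).Adj x y)
    (hxz : x = z ∨ ¬(albertGraph M).Adj x z)
    (hyz : y = z ∨ ¬(albertGraph M).Adj y z) :
    ∃ v, (albertGraph M).Adj v x ∧ (albertGraph M).Adj v y ∧ (albertGraph M).Adj v z := by
  have hn0 : 0 < n := by omega
  have hm0 : 0 < m := by omega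
  rcases albert_cases x with ⟨i1, s1, rfl⟩ | ⟨j1, t1, rfl⟩ <;>
    rcases albert_cases y with ⟨i2, s2, rfl⟩ | ⟨j2, t2, rfl⟩ <;>
    rcases albert_cases z with ⟨i3, s3, rfl⟩ | ⟨j3, t3, rfl⟩
  · -- RRR
    obtain ⟨j, t, e1, e2, e3⟩ := rowCaseGen M hm hn0 hM i1 i2 i3 s1 s2 s3
      (compat_rr M hxy) (compat_rr M hxz) (compat_rr M hyz)
    exact ⟨cvx j t, (adj_cr M ..).mpr e1, (adj_cr M ..).mpr e2, (adj_cr M ..).mpr e3⟩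
  · -- RRC
    refine ⟨cvx j3 (!t3), (adj_cr M ..).mpr (nonadj_rc M hxz),
      (adj_cr M ..).mpr (nonadj_rc M hyz), (adj_cc M ..).mpr ⟨rfl, bnotne t3⟩⟩
  · -- RCR
    refine ⟨cvx j2 (!t2), (adj_cr M ..).mpr (nonadj_rc M hxy),
      (adj_cc M ..).mpr ⟨rfl, bnotne t2⟩, (adj_cr M ..).mpr (nonadj_cr M hyz)⟩
  · -- RCC
    refine ⟨rvx i1 (!s1), (adj_rr M ..).mpr ⟨rfl, bnotne s1⟩,
      (adj_rc M ..).mpr ((nonadj_rc M hxy).trans (bswap ..)),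
      (adj_rc M ..).mpr ((nonadj_rc M hxz).trans (bswap ..))⟩
  · -- CRR
    refine ⟨cvx j1 (!t1), (adj_cc M ..).mpr ⟨rfl, bnotne t1⟩,
      (adj_cr M ..).mpr (nonadj_cr M hxy), (adj_cr M ..).mpr (nonadj_cr M hxz)⟩
  · -- CRC
    refine ⟨rvx i2 (!s2), (adj_rc M ..).mpr ((nonadj_cr M hxy).trans (bswap ..)),
      (adj_rr M ..).mpr ⟨rfl, bnotne s2⟩,
      (adj_rc M ..).mpr ((nonadj_rc M hyz).trans (bswap ..))⟩
  · -- CCR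
    refine ⟨rvx i3 (!s3), (adj_rc M ..).mpr ((nonadj_cr M hxz).trans (bswap ..)),
      (adj_rc M ..).mpr ((nonadj_cr M hyz).trans (bswap ..)),
      (adj_rr M ..).mpr ⟨rfl, bnotne s3⟩⟩
  · -- CCC
    obtain ⟨i, t, e1, e2, e3⟩ := rowCaseGen (fun j i => M i j) hn hm0
      (shattered_transpose M hM) j1 j2 j3 t1 t2 t3
      (compat_cc M hxy) (compat_cc M hxz) (compat_cc M hyz)
    exact ⟨rvx i t, (adj_rc M ..).mpr (e1.trans (bcomm ..)),
      (adj_rc M ..).mpr (e2.trans (bcomm ..)), (adj_rc M ..).mpr (e3.trans (bcomm ..))⟩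

end Common

theorem stmt_7 {m n : ℕ} (hm : 4 ≤ m) (hn : 4 ≤ n)
    (M : Fin m → Fin n → Bool) (hM : Shattered M)
    (S : Finset (AlbertVertex m n)) (hS : S.card ≤ 3)
    (hind : ∀ x ∈ S, ∀ y ∈ S, x ≠ y → ¬ (albertGraph M).Adj x y) :
    ∃ v, ∀ x ∈ S, (albertGraph M).Adj v x := by
  have hm3 : 3 ≤ m := by omega
  have hn3 : 3 ≤ n := by omega
  rcases S.eq_empty_or_nonempty with rfl | ⟨x, hx⟩
  · exact ⟨.a ⟨0, by omega⟩, by simp⟩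
  · -- find x, y, z ∈ S covering S
    have key : ∃ y ∈ S, ∃ z ∈ S, ∀ w ∈ S, w = x ∨ w = y ∨ w = z := by
      rcases (S.erase x).eq_empty_or_nonempty with h1 | ⟨y, hy⟩
      · refine ⟨x, hx, x, hx, fun w hw => ?_⟩
        left
        by_contra hne
        exact absurd (Finset.mem_erase.mpr ⟨hne, hw⟩) (by simp [h1])
      · have hyS : y ∈ S := Finset.mem_of_mem_erase hy
        have hyx : y ≠ x := Finset.ne_of_mem_erase hy
        rcases ((S.erase x).erase y).eq_empty_or_nonempty with h2 | ⟨z, hz⟩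
        · refine ⟨y, hyS, y, hyS, fun w hw => ?_⟩
          by_cases hwx : w = x
          · exact .inl hwx
          · by_cases hwy : w = y
            · exact .inr (.inl hwy)
            · exact absurd (Finset.mem_erase.mpr ⟨hwy, Finset.mem_erase.mpr ⟨hwx, hw⟩⟩)
                (by simp [h2])
        · have hzS : z ∈ S := Finset.mem_of_mem_erase (Finset.mem_of_mem_erase hz)
          have hzy : z ≠ y := Finset.ne_of_mem_erase hz
          have hzx : z ≠ x := Finset.ne_of_mem_erase (Finset.mem_of_mem_erase hz)
          refine ⟨y, hyS, z, hzS, fun w hw => ?_⟩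
          by_contra hc
          push_neg at hc
          obtain ⟨hwx, hwy, hwz⟩ := hc
          have hsub : ({w, x, y, z} : Finset (AlbertVertex m n)) ⊆ S := by
            intro u hu
            simp only [Finset.mem_insert, Finset.mem_singleton] at hu
            rcases hu with rfl | rfl | rfl | rfl <;> assumption
          have hcard : ({w, x, y, z} : Finset (AlbertVertex m n)).card = 4 := by
            rw [Finset.card_insert_of_notMem (by simp [hwx, hwy, hwz]),
              Finset.card_insert_of_notMem (by simp [hyx.symm, hzx.symm]),
              Finset.card_insert_of_notMem (by simp [hzy.symm]),
              Finset.card_singleton]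
          have := Finset.card_le_card hsub
          omega
    obtain ⟨y, hy, z, hz, hcov⟩ := key
    have pair : ∀ a ∈ S, ∀ b ∈ S, a = b ∨ ¬(albertGraph M).Adj a b := fun a ha b hb => by
      by_cases hab : a = b
      · exact .inl hab
      · exact .inr (hind a ha b hb hab)
    obtain ⟨v, hvx, hvy, hvz⟩ := commonNbr M hm3 hn3 hM x y z
      (pair x hx y hy) (pair x hx z hz) (pair y hy z hz)
    refine ⟨v, fun w hw => ?_⟩
    rcases hcov w hw with rfl | rfl | rfl <;> assumption
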